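/- Assume L(ε) stabilizes at k ≥ 0. Then for every l ≥ 2: E_{k+1+a,k+1+l} = 0 for all 1 ≤ a ≤ l−1, and M_{k+1+a,k+1+l} = M_{k+a,k+l} for all 1 ≤ a ≤ l; i.e., from row k+1 onwards the semi-infinite operator matrix M = (M_{a,b}) has Toeplitz structure (each row below row k+1 is the previous row shifted one place to the right). -/

import Mathlib

private lemma aux_shift_sum {γ : Type*} [AddCommMonoid γ] (c a b : ℕ) (f : ℕ → γ) :
    ∑ v ∈ Finset.Icc (a + c) (b + c), f v = ∑ u ∈ Finset.Icc a b, f (u + c) := by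
  rw [← Finset.map_add_right_Icc, Finset.sum_map]
  rfl

private lemma aux_range_eq_insert (m : ℕ) (hm : 1 ≤ m) :
    Finset.range (m + 1) = insert 0 (Finset.Icc 1 m) := by
  ext i; simp [Finset.mem_range, Finset.mem_Icc]; omega

private lemma aux_icc_one_insert (kk : ℕ) (h : 1 ≤ kk) :
    Finset.Icc 1 (kk + 1) = insert 1 (Finset.Icc 2 (kk + 1)) := by
  ext i; simp [Finset.mem_Icc]; omega


theorem stmt_8
    {𝕂 : Type*} [RCLike 𝕂]
    {B B' : Type*} [AddCommGroup B] [Module 𝕂 B]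
    [AddCommGroup B'] [Module 𝕂 B']
    (L : ℕ → B →ₗ[𝕂] B')
    (Sb S : ℕ → B →ₗ[𝕂] B')
    (N Nc : ℕ → Submodule 𝕂 B)
    (R Rc : ℕ → Submodule 𝕂 B')
    (P : ℕ → B' →ₗ[𝕂] B')
    (T : ℕ → B' →ₗ[𝕂] B)
    (E M : ℕ → ℕ → B →ₗ[𝕂] B)
    (hL : ∃ i, L i ≠ 0)
    (hN0 : N 0 = ⊤) (hRc0 : Rc 0 = ⊤)
    (hSb1 : Sb 1 = L 0)
    (hSbrec : ∀ k, 1 ≤ k → Sb (k + 1) = ∑ i ∈ Finset.Icc 1 k, (L i).comp (M i k))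
    (hSdef : ∀ k, S (k + 1) = Sb (k + 1) - ∑ i ∈ Finset.Icc 1 k, (P i).comp (Sb (k + 1)))
    (hNdef : ∀ k, N (k + 1) = LinearMap.ker (S (k + 1)) ⊓ N k)
    (hRdef : ∀ k, R (k + 1) = Submodule.map (S (k + 1)) (N k))
    (hNcompl : ∀ k, Disjoint (Nc (k + 1)) (N (k + 1)) ∧ Nc (k + 1) ⊔ N (k + 1) = N k)
    (hRcompl : ∀ k, Disjoint (R (k + 1)) (Rc (k + 1)) ∧ R (k + 1) ⊔ Rc (k + 1) = Rc k)
    (hPrange : ∀ i, 1 ≤ i → LinearMap.range (P i) ≤ R i)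
    (hPid : ∀ i, 1 ≤ i → ∀ y ∈ R i, P i y = y)
    (hPzeroRc : ∀ i, 1 ≤ i → ∀ y ∈ Rc i, P i y = 0)
    (hPzeroR : ∀ i j, 1 ≤ j → j < i → ∀ y ∈ R j, P i y = 0)
    (hTrange : ∀ i, 1 ≤ i → ∀ y, T i y ∈ Nc i)
    (hTS : ∀ i, 1 ≤ i → ∀ x ∈ Nc i, T i (S i x) = x)
    (hST : ∀ i, 1 ≤ i → ∀ y, S i (T i y) = P i y)
    (hE11 : E 1 1 = LinearMap.id)
    (hEdiag : ∀ k, E (k + 1) (k + 1) = LinearMap.id)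
    (hErec : ∀ k i, 1 ≤ i → i ≤ k →
      E i (k + 1) = -((T i).comp (∑ v ∈ Finset.Icc (i + 1) (k + 1), (Sb v).comp (E v (k + 1)))))
    (hM11 : M 1 1 = LinearMap.id)
    (hM1 : ∀ k, 1 ≤ k → M 1 (k + 1) = E 1 (k + 1))
    (hMrec : ∀ k a, 2 ≤ a → a ≤ k + 1 →
      M a (k + 1) = ∑ b ∈ Finset.Icc (a - 1) k, (M (a - 1) b).comp (E (b + 1) (k + 1)))
    (rank : B → ℕ∞)
    (hrank : ∀ b0 : B, rank b0 = sSup {x : ℕ∞ | ∃ m : ℕ, 1 ≤ m ∧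
      (∃ b : ℕ → B, b 0 = b0 ∧
        ∀ l, l + 1 ≤ m → ∑ i ∈ Finset.range (l + 1), L i (b (l - i)) = 0) ∧ x = (m : ℕ∞)})
    (k : ℕ)
    (hstab : (∀ b0 : B, rank b0 ≤ (k : ℕ∞) ∨ rank b0 = ⊤) ∧ ∃ b0 : B, rank b0 = (k : ℕ∞))
    :
    ∀ l, 2 ≤ l →
      (∀ a, 1 ≤ a → a + 1 ≤ l → E (k + 1 + a) (k + 1 + l) = 0) ∧
      (∀ a, 1 ≤ a → a ≤ l → M (k + 1 + a) (k + 1 + l) = M (k + a) (k + l)) := by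
  clear hL hTS hE11
  obtain ⟨hstab1, -⟩ := hstab
  -- pointwise versions of the defining recursions
  have hSapp : ∀ (w : ℕ) (y : B), S (w + 1) y
      = Sb (w + 1) y - ∑ j ∈ Finset.Icc 1 w, P j (Sb (w + 1) y) := by
    intro w y
    rw [hSdef w]
    simp [LinearMap.sub_apply, LinearMap.sum_apply, LinearMap.comp_apply]
  have hS1app : ∀ y : B, S 1 y = L 0 y := by
    intro y
    have h := hSapp 0 y
    simpa [hSb1] using h
  have hsplitSb : ∀ (v : ℕ), 1 ≤ v → ∀ y : B,
      Sb v y = S v y + ∑ j ∈ Finset.Icc 1 (v - 1), P j (Sb v y) := by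
    intro v hv y
    obtain ⟨w, rfl⟩ : ∃ w, v = w + 1 := ⟨v - 1, by omega⟩
    simp only [Nat.add_sub_cancel]
    rw [hSapp w y]; abel
  have hSbrecApp : ∀ (w : ℕ), 1 ≤ w → ∀ y : B,
      Sb (w + 1) y = ∑ i ∈ Finset.Icc 1 w, L i (M i w y) := by
    intro w hw y
    rw [hSbrec w hw]
    simp [LinearMap.sum_apply, LinearMap.comp_apply]
  have hMrecApp : ∀ (w a : ℕ), 2 ≤ a → a ≤ w + 1 → ∀ y : B,
      M a (w + 1) y = ∑ b ∈ Finset.Icc (a - 1) w, M (a - 1) b (E (b + 1) (w + 1) y) := by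
    intro w a h2 hle y
    rw [hMrec w a h2 hle]
    simp [LinearMap.sum_apply, LinearMap.comp_apply]
  have hErecApp : ∀ (w i : ℕ), 1 ≤ i → i ≤ w → ∀ y : B,
      E i (w + 1) y = - T i (∑ v ∈ Finset.Icc (i + 1) (w + 1), Sb v (E v (w + 1) y)) := by
    intro w i h1 hiw y
    rw [hErec w i h1 hiw]
    simp [LinearMap.neg_apply, LinearMap.comp_apply, LinearMap.sum_apply, map_sum]
  -- basic submodule facts
  have hNmono : ∀ t, N (t + 1) ≤ N t := fun t => by rw [hNdef t]; exact inf_le_right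
  have hNleAdd : ∀ (d s : ℕ), N (s + d) ≤ N s := by
    intro d
    induction d with
    | zero => intro s; exact le_rfl
    | succ d ih => intro s; exact le_trans (hNmono (s + d)) (ih s)
  have hNle : ∀ s t : ℕ, s ≤ t → N t ≤ N s := by
    intro s t hst
    obtain ⟨d, rfl⟩ := Nat.exists_eq_add_of_le hst
    exact hNleAdd d s
  have hNker : ∀ t, ∀ x ∈ N (t + 1), S (t + 1) x = 0 := by
    intro t x hx
    rw [hNdef t] at hx
    exact hx.1
  have hNcN : ∀ t, Nc (t + 1) ≤ N t := by
    intro t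
    exact le_trans le_sup_left (le_of_eq (hNcompl t).2)
  have hRcmono : ∀ t, Rc (t + 1) ≤ Rc t := by
    intro t
    exact le_trans le_sup_right (le_of_eq (hRcompl t).2)
  have hRcleAdd : ∀ (d s : ℕ), Rc (s + d) ≤ Rc s := by
    intro d
    induction d with
    | zero => intro s; exact le_rfl
    | succ d ih => intro s; exact le_trans (hRcmono (s + d)) (ih s)
  have hRcle : ∀ s t : ℕ, s ≤ t → Rc t ≤ Rc s := by
    intro s t hst
    obtain ⟨d, rfl⟩ := Nat.exists_eq_add_of_le hst
    exact hRcleAdd d s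
  have hRleRc : ∀ j t : ℕ, j ≤ t → R (t + 1) ≤ Rc j := by
    intro j t hjt
    exact le_trans (le_trans le_sup_left (le_of_eq (hRcompl t).2)) (hRcle j t hjt)
  -- RS t := R 1 ⊔ ... ⊔ R t
  set RS : ℕ → Submodule 𝕂 B' := fun t => (Finset.Icc 1 t).sup R with hRSdef
  have hRS0 : RS 0 = ⊥ := by
    simp only [hRSdef]
    rw [show Finset.Icc 1 0 = (∅ : Finset ℕ) from Finset.Icc_eq_empty (by omega)]
    simp
  have hRSsucc : ∀ t, RS (t + 1) = RS t ⊔ R (t + 1) := by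
    intro t
    simp only [hRSdef]
    rw [show Finset.Icc 1 (t + 1) = insert (t + 1) (Finset.Icc 1 t) from by
      ext i; simp [Finset.mem_Icc]; omega]
    rw [Finset.sup_insert]
    exact sup_comm _ _
  have hRSmono : ∀ s t : ℕ, s ≤ t → RS s ≤ RS t := by
    intro s t hst
    exact Finset.sup_mono (Finset.Icc_subset_Icc_right hst)
  have hRmemRS : ∀ j t : ℕ, 1 ≤ j → j ≤ t → R j ≤ RS t := by
    intro j t h1 h2
    exact Finset.le_sup (Finset.mem_Icc.mpr ⟨h1, h2⟩)
  -- P kills lower R-sums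
  have hA0 : ∀ i t : ℕ, t < i → ∀ z ∈ RS t, P i z = 0 := by
    intro i t
    induction t with
    | zero =>
        intro _ z hz
        rw [hRS0] at hz
        simp [(Submodule.mem_bot 𝕂).mp hz]
    | succ t ih =>
        intro hti z hz
        rw [hRSsucc t] at hz
        obtain ⟨y, hy, r, hr, rfl⟩ := Submodule.mem_sup.mp hz
        rw [map_add, ih (by omega) y hy, hPzeroR i (t + 1) (by omega) (by omega) r hr]
        simp
  have hA1 : ∀ t : ℕ, ∀ y ∈ RS t, ∑ j ∈ Finset.Icc 1 t, P j y = y := by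
    intro t
    induction t with
    | zero =>
        intro y hy
        rw [hRS0] at hy
        simp [(Submodule.mem_bot 𝕂).mp hy]
    | succ t ih =>
        intro y hy
        rw [hRSsucc t] at hy
        obtain ⟨z, hz, r, hr, rfl⟩ := Submodule.mem_sup.mp hy
        rw [Finset.sum_Icc_succ_top (by omega)]
        have hPjr : ∀ j ∈ Finset.Icc 1 t, P j (z + r) = P j z := by
          intro j hj
          simp only [Finset.mem_Icc] at hj
          have hrRc : r ∈ Rc j := hRleRc j t hj.2 hr
          rw [map_add, hPzeroRc j hj.1 r hrRc, add_zero]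
        rw [Finset.sum_congr rfl hPjr, ih z hz, map_add,
          hA0 (t + 1) t (by omega) z hz, hPid (t + 1) (by omega) r hr]
        abel
  -- kill lemma : if Sb (w+1) y ∈ RS w then S (w+1) y = 0
  have hkill : ∀ (w : ℕ) (y : B), Sb (w + 1) y ∈ RS w → S (w + 1) y = 0 := by
    intro w y hy
    rw [hSapp w y, hA1 w _ hy, sub_self]
  -- Need2 : Sb (w+1) x ∈ RS (w+1) for x ∈ N w
  have hNeed2 : ∀ (w : ℕ), ∀ x ∈ N w, Sb (w + 1) x ∈ RS (w + 1) := by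
    intro w x hx
    rw [hsplitSb (w + 1) (by omega) x]
    simp only [Nat.add_sub_cancel]
    apply Submodule.add_mem
    · have hmem : S (w + 1) x ∈ R (w + 1) := by
        rw [hRdef w]; exact ⟨x, hx, rfl⟩
      exact hRmemRS (w + 1) (w + 1) (by omega) le_rfl hmem
    · apply Submodule.sum_mem
      intro j hj
      simp only [Finset.mem_Icc] at hj
      exact hRmemRS j (w + 1) hj.1 (by omega) (hPrange j hj.1 ⟨_, rfl⟩)
  have hR1 : ∀ y : B, L 0 y ∈ R 1 := by
    intro y
    rw [hRdef 0]
    exact ⟨y, by rw [hN0]; trivial, hS1app y⟩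
  have hMdiag : ∀ a, 1 ≤ a → M a a = LinearMap.id := by
    intro a ha
    induction a with
    | zero => omega
    | succ a ih =>
        rcases Nat.eq_or_lt_of_le ha with h1 | h2
        · obtain rfl : a = 0 := by omega
          exact hM11
        · have ha1 : 1 ≤ a := by omega
          rw [hMrec a (a + 1) (by omega) le_rfl]
          simp only [Nat.add_sub_cancel, Finset.Icc_self, Finset.sum_singleton]
          rw [ih ha1, hEdiag a]
          simp
  -- ===== the star identity =====
  have hstar : ∀ (kk : ℕ) (x : B),
      ∑ v ∈ Finset.Icc 1 (kk + 1), L (v - 1) (M v (kk + 1) x) = S (kk + 1) x := by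
    intro kk x
    rcases Nat.eq_zero_or_pos kk with rfl | hkk
    · simp only [Finset.Icc_self, Finset.sum_singleton]
      rw [hM11, hS1app x]
      simp
    -- claim1 : ∑_{v∈Icc 1 (kk+1)} Sb v (E v (kk+1) x) = S (kk+1) x
    have claim1 : ∑ v ∈ Finset.Icc 1 (kk + 1), Sb v (E v (kk + 1) x) = S (kk + 1) x := by
      have hterm : ∀ v ∈ Finset.Icc 1 (kk + 1),
          Sb v (E v (kk + 1) x) = S v (E v (kk + 1) x)
            + ∑ j ∈ Finset.Icc 1 (v - 1), P j (Sb v (E v (kk + 1) x)) := by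
        intro v hv
        simp only [Finset.mem_Icc] at hv
        exact hsplitSb v hv.1 _
      rw [Finset.sum_congr rfl hterm, Finset.sum_add_distrib]
      have hswap : ∑ v ∈ Finset.Icc 1 (kk + 1), ∑ j ∈ Finset.Icc 1 (v - 1),
            P j (Sb v (E v (kk + 1) x))
          = ∑ j ∈ Finset.Icc 1 kk, ∑ v ∈ Finset.Icc (j + 1) (kk + 1),
            P j (Sb v (E v (kk + 1) x)) := by
        apply Finset.sum_comm'
        intro v j
        simp only [Finset.mem_Icc]
        omega
      rw [hswap]
      have hinner : ∀ j ∈ Finset.Icc 1 kk,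
          ∑ v ∈ Finset.Icc (j + 1) (kk + 1), P j (Sb v (E v (kk + 1) x))
            = - S j (E j (kk + 1) x) := by
        intro j hj
        simp only [Finset.mem_Icc] at hj
        rw [← map_sum]
        have hE := hErecApp kk j hj.1 hj.2 x
        have : S j (E j (kk + 1) x)
            = - P j (∑ v ∈ Finset.Icc (j + 1) (kk + 1), Sb v (E v (kk + 1) x)) := by
          rw [hE, map_neg, hST j hj.1]
        rw [this]
        exact (neg_neg _).symm
      rw [Finset.sum_congr rfl hinner]
      rw [Finset.sum_Icc_succ_top (show 1 ≤ kk + 1 by omega)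
        (fun v => S v (E v (kk + 1) x))]
      rw [hEdiag kk]
      simp
    -- claim2 : ∑_{v∈Icc 1 (kk+1)} Sb v (E v (kk+1) x) = LHS of star
    have claim2 : ∑ v ∈ Finset.Icc 1 (kk + 1), Sb v (E v (kk + 1) x)
        = ∑ v ∈ Finset.Icc 1 (kk + 1), L (v - 1) (M v (kk + 1) x) := by
      rw [aux_icc_one_insert kk hkk, Finset.sum_insert (by simp),
        Finset.sum_insert (by simp)]
      have hv1 : Sb 1 (E 1 (kk + 1) x) = L 0 (M 1 (kk + 1) x) := by
        rw [hSb1, hM1 kk hkk]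
      rw [hv1]
      congr 1
      -- middle part
      have hterm : ∀ v ∈ Finset.Icc 2 (kk + 1),
          Sb v (E v (kk + 1) x)
            = ∑ i ∈ Finset.Icc 1 (v - 1), L i (M i (v - 1) (E v (kk + 1) x)) := by
        intro v hv
        simp only [Finset.mem_Icc] at hv
        obtain ⟨w, rfl⟩ : ∃ w, v = w + 1 := ⟨v - 1, by omega⟩
        simp only [Nat.add_sub_cancel]
        exact hSbrecApp w (by omega) _
      rw [Finset.sum_congr rfl hterm]
      have hswap : ∑ v ∈ Finset.Icc 2 (kk + 1), ∑ i ∈ Finset.Icc 1 (v - 1),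
            L i (M i (v - 1) (E v (kk + 1) x))
          = ∑ i ∈ Finset.Icc 1 kk, ∑ v ∈ Finset.Icc (i + 1) (kk + 1),
            L i (M i (v - 1) (E v (kk + 1) x)) := by
        apply Finset.sum_comm'
        intro v i
        simp only [Finset.mem_Icc]
        omega
      rw [hswap]
      have hinner : ∀ i ∈ Finset.Icc 1 kk,
          ∑ v ∈ Finset.Icc (i + 1) (kk + 1), L i (M i (v - 1) (E v (kk + 1) x))
            = L i (M (i + 1) (kk + 1) x) := by
        intro i hi
        simp only [Finset.mem_Icc] at hi
        rw [← map_sum]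
        congr 1
        have hsh := aux_shift_sum 1 i kk (fun v => M i (v - 1) (E v (kk + 1) x))
        rw [hsh]
        simp only [Nat.add_sub_cancel]
        rw [hMrecApp kk (i + 1) (by omega) (by omega) x]
        simp only [Nat.add_sub_cancel]
      rw [Finset.sum_congr rfl hinner]
      have hsh2 := aux_shift_sum 1 1 kk (fun v => L (v - 1) (M v (kk + 1) x))
      rw [hsh2]
      simp only [Nat.add_sub_cancel]
    rw [← claim2, claim1]
  -- ===== range of E =====
  have hErange : ∀ (w i : ℕ), 1 ≤ i → i ≤ w → ∀ x : B, E i (w + 1) x ∈ N (i - 1) := by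
    intro w i h1 hiw x
    rw [hErecApp w i h1 hiw x]
    obtain ⟨j, rfl⟩ : ∃ j, i = j + 1 := ⟨i - 1, by omega⟩
    simp only [Nat.add_sub_cancel]
    exact Submodule.neg_mem _ (hNcN j (hTrange (j + 1) (by omega) _))
  -- ===== Lemma W =====
  have hW : ∀ (kk : ℕ), ∀ c, 1 ≤ c → c ≤ kk + 1 → ∀ x ∈ N (kk + 1),
      ∑ v ∈ Finset.Icc c (kk + 1), L (v - c) (M v (kk + 1) x) = 0 := by
    intro kk
    induction kk using Nat.strong_induction_on with
    | _ kk ih =>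
      intro c hc1 hc2 x hx
      rcases Nat.eq_or_lt_of_le hc1 with h1 | h2
      · -- c = 1
        obtain rfl : c = 1 := h1.symm
        rw [hstar kk x]
        exact hNker kk x hx
      · -- c ≥ 2
        obtain ⟨c', rfl⟩ : ∃ c', c = c' + 1 := ⟨c - 1, by omega⟩
        have hc'1 : 1 ≤ c' := by omega
        have hterm : ∀ v ∈ Finset.Icc (c' + 1) (kk + 1),
            L (v - (c' + 1)) (M v (kk + 1) x)
              = ∑ b ∈ Finset.Icc (v - 1) kk,
                  L (v - (c' + 1)) (M (v - 1) b (E (b + 1) (kk + 1) x)) := by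
          intro v hv
          simp only [Finset.mem_Icc] at hv
          rw [hMrecApp kk v (by omega) hv.2 x, map_sum]
        rw [Finset.sum_congr rfl hterm]
        have hswap : ∑ v ∈ Finset.Icc (c' + 1) (kk + 1), ∑ b ∈ Finset.Icc (v - 1) kk,
              L (v - (c' + 1)) (M (v - 1) b (E (b + 1) (kk + 1) x))
            = ∑ b ∈ Finset.Icc c' kk, ∑ v ∈ Finset.Icc (c' + 1) (b + 1),
              L (v - (c' + 1)) (M (v - 1) b (E (b + 1) (kk + 1) x)) := by
          apply Finset.sum_comm'
          intro v b
          simp only [Finset.mem_Icc]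
          omega
        rw [hswap]
        apply Finset.sum_eq_zero
        intro b hb
        simp only [Finset.mem_Icc] at hb
        have hsh := aux_shift_sum 1 c' b
          (fun v => L (v - (c' + 1)) (M (v - 1) b (E (b + 1) (kk + 1) x)))
        rw [hsh]
        simp only [Nat.add_sub_cancel]
        have hyN : E (b + 1) (kk + 1) x ∈ N b := by
          rcases Nat.eq_or_lt_of_le hb.2 with hbe | hbl
          · rw [hbe, hEdiag kk]
            exact hNmono kk hx
          · have := hErange kk (b + 1) (by omega) (by omega) x
            simpa using this
        have hcong : ∀ u ∈ Finset.Icc c' b,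
            L (u + 1 - (c' + 1)) (M u b (E (b + 1) (kk + 1) x))
              = L (u - c') (M u b (E (b + 1) (kk + 1) x)) := by
          intro u hu
          have hnat : u + 1 - (c' + 1) = u - c' := by omega
          rw [hnat]
        rw [Finset.sum_congr rfl hcong]
        obtain ⟨b', rfl⟩ : ∃ b', b = b' + 1 := ⟨b - 1, by omega⟩
        exact ih b' (by omega) c' hc'1 (by omega) _ hyN
  -- canonical chains
  have hCanonChain : ∀ t, 1 ≤ t → ∀ x ∈ N t, ∀ l, l + 1 ≤ t →
      ∑ i ∈ Finset.range (l + 1), L i (M (t - (l - i)) t x) = 0 := by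
    intro t ht x hx l hl
    have hrange : Finset.range (l + 1) = Finset.Icc 0 l := by
      ext i; simp [Finset.mem_range, Finset.mem_Icc]
    rw [hrange]
    have hcong : ∀ i ∈ Finset.Icc 0 l,
        L i (M (t - (l - i)) t x) = L (i + (t - l) - (t - l)) (M (i + (t - l)) t x) := by
      intro i hi
      simp only [Finset.mem_Icc] at hi
      have h1 : t - (l - i) = i + (t - l) := by omega
      have h2 : i + (t - l) - (t - l) = i := by omega
      rw [h1, h2]
    rw [Finset.sum_congr rfl hcong]
    have hsh := aux_shift_sum (t - l) 0 l (fun v => L (v - (t - l)) (M v t x))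
    rw [← hsh]
    simp only [Nat.zero_add]
    have hlt : l + (t - l) = t := by omega
    rw [hlt]
    obtain ⟨t', rfl⟩ : ∃ t', t = t' + 1 := ⟨t - 1, by omega⟩
    exact hW t' (t' + 1 - l) (by omega) (by omega) x hx
  -- ===== main induction: roots of chains lie in N, with obstruction control =====
  have hPred : ∀ m : ℕ, ∀ b : ℕ → B,
      (∀ l, l + 1 ≤ m → ∑ i ∈ Finset.range (l + 1), L i (b (l - i)) = 0) →
      (b 0 ∈ N m) ∧ (1 ≤ m →
        (∑ i ∈ Finset.Icc 1 m, L i (b (m - i))) - Sb (m + 1) (b 0) ∈ RS m) := by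
    intro m
    induction m using Nat.strong_induction_on with
    | _ m ih =>
      intro b hb
      rcases m with _ | m'
      · exact ⟨by rw [hN0]; trivial, by omega⟩
      -- zero-root obstruction claim, for all lengths t ≤ m'+1
      have hZ : ∀ t, 1 ≤ t → t ≤ m' + 1 → ∀ d : ℕ → B,
          (∀ l, l + 1 ≤ t → ∑ i ∈ Finset.range (l + 1), L i (d (l - i)) = 0) →
          d 0 = 0 → (∑ i ∈ Finset.Icc 1 t, L i (d (t - i))) ∈ RS t := by
        intro t ht1 htm d hd hd0
        obtain ⟨t'', rfl⟩ : ∃ t'', t = t'' + 1 := ⟨t - 1, by omega⟩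
        rcases Nat.eq_zero_or_pos t'' with rfl | ht'' 
        · simp only [Finset.Icc_self, Finset.sum_singleton, Nat.sub_self, hd0, map_zero]
          exact Submodule.zero_mem _
        · set e : ℕ → B := fun j => d (j + 1) with he
          have hechain : ∀ l, l + 1 ≤ t'' →
              ∑ i ∈ Finset.range (l + 1), L i (e (l - i)) = 0 := by
            intro l hl
            have h2 := hd (l + 1) (by omega)
            rw [Finset.sum_range_succ] at h2
            rw [Nat.sub_self, hd0, map_zero, add_zero] at h2
            rw [← h2]
            apply Finset.sum_congr rfl
            intro i hi
            simp only [Finset.mem_range] at hi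
            have : l - i + 1 = l + 1 - i := by omega
            simp only [he, this]
          have hIH := ih t'' (by omega) e hechain
          have hd1N : d 1 ∈ N t'' := hIH.1
          have hIH2 := hIH.2 ht''
          have hsum : ∑ i ∈ Finset.Icc 1 (t'' + 1), L i (d (t'' + 1 - i))
              = ∑ i ∈ Finset.Icc 1 t'', L i (e (t'' - i)) := by
            rw [Finset.sum_Icc_succ_top (show 1 ≤ t'' + 1 by omega)]
            rw [Nat.sub_self, hd0, map_zero, add_zero]
            apply Finset.sum_congr rfl
            intro i hi
            simp only [Finset.mem_Icc] at hi
            have : t'' - i + 1 = t'' + 1 - i := by omega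
            simp only [he, this]
          rw [hsum]
          have hab : ∑ i ∈ Finset.Icc 1 t'', L i (e (t'' - i))
              = ((∑ i ∈ Finset.Icc 1 t'', L i (e (t'' - i))) - Sb (t'' + 1) (d 1))
                + Sb (t'' + 1) (d 1) := by abel
          rw [hab]
          exact Submodule.add_mem _ (hRSmono t'' (t'' + 1) (by omega) hIH2)
            (hNeed2 t'' (d 1) hd1N)
      rcases Nat.eq_zero_or_pos m' with rfl | hm'1
      · -- m = 1
        have h0 := hb 0 (by omega)
        simp at h0
        have hmem1 : b 0 ∈ N 1 := by
          rw [hNdef 0]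
          exact ⟨LinearMap.mem_ker.mpr (by rw [hS1app]; exact h0), by rw [hN0]; trivial⟩
        refine ⟨hmem1, fun _ => ?_⟩
        have hSb2 : Sb 2 (b 0) = L 1 (b 0) := by
          rw [hSbrecApp 1 le_rfl (b 0)]
          simp only [Finset.Icc_self, Finset.sum_singleton, hM11, LinearMap.id_coe, id_eq]
        simp only [Finset.Icc_self, Finset.sum_singleton]
        rw [show (2 : ℕ) = 1 + 1 from rfl] at hSb2
        rw [hSb2]
        simp only [Nat.sub_self]
        rw [sub_self]
        exact Submodule.zero_mem _
      · -- m = m' + 1 with m' ≥ 1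
        have hbtr : ∀ l, l + 1 ≤ m' → ∑ i ∈ Finset.range (l + 1), L i (b (l - i)) = 0 :=
          fun l hl => hb l (by omega)
        have hb0m' : b 0 ∈ N m' := (ih m' (by omega) b hbtr).1
        -- canonical chain at length m'
        set c : ℕ → B := fun j => M (m' - j) m' (b 0) with hc
        have hcchain : ∀ l, l + 1 ≤ m' →
            ∑ i ∈ Finset.range (l + 1), L i (c (l - i)) = 0 := by
          intro l hl
          simpa only [hc] using hCanonChain m' hm'1 (b 0) hb0m' l hl
        set d : ℕ → B := fun j => b j - c j with hd
        have hbj : ∀ j, b j = c j + d j := by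
          intro j; simp only [hd]; abel
        have hdchain : ∀ l, l + 1 ≤ m' →
            ∑ i ∈ Finset.range (l + 1), L i (d (l - i)) = 0 := by
          intro l hl
          simp only [hd, map_sub, Finset.sum_sub_distrib, hbtr l hl, hcchain l hl, sub_zero]
        have hd0 : d 0 = 0 := by
          simp only [hd, hc, Nat.sub_zero, hMdiag m' hm'1, LinearMap.id_coe, id_eq, sub_self]
        have hlvl := hb m' (by omega)
        rw [aux_range_eq_insert m' hm'1, Finset.sum_insert (by simp)] at hlvl
        rw [Nat.sub_zero] at hlvl
        have hsplit : ∑ i ∈ Finset.Icc 1 m', L i (b (m' - i))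
            = (∑ i ∈ Finset.Icc 1 m', L i (c (m' - i)))
              + ∑ i ∈ Finset.Icc 1 m', L i (d (m' - i)) := by
          rw [← Finset.sum_add_distrib]
          apply Finset.sum_congr rfl
          intro i hi
          rw [hbj (m' - i), map_add]
        have hcSb : ∑ i ∈ Finset.Icc 1 m', L i (c (m' - i)) = Sb (m' + 1) (b 0) := by
          rw [hSbrecApp m' hm'1 (b 0)]
          apply Finset.sum_congr rfl
          intro i hi
          simp only [Finset.mem_Icc] at hi
          simp only [hc]
          have hidx : m' - (m' - i) = i := by omega
          rw [hidx]
        have hdZ : ∑ i ∈ Finset.Icc 1 m', L i (d (m' - i)) ∈ RS m' :=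
          hZ m' hm'1 (by omega) d hdchain hd0
        rw [hsplit, hcSb] at hlvl
        have h2 : Sb (m' + 1) (b 0)
            + (L 0 (b m') + ∑ i ∈ Finset.Icc 1 m', L i (d (m' - i))) = 0 := by
          rw [← hlvl]; abel
        have hmem : Sb (m' + 1) (b 0) ∈ RS m' := by
          rw [add_eq_zero_iff_eq_neg.mp h2]
          exact Submodule.neg_mem _ (Submodule.add_mem _
            (hRmemRS 1 m' le_rfl hm'1 (hR1 (b m'))) hdZ)
        have hS0 : S (m' + 1) (b 0) = 0 := hkill m' (b 0) hmem
        have hi1 : b 0 ∈ N (m' + 1) := by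
          rw [hNdef m']
          exact ⟨LinearMap.mem_ker.mpr hS0, hb0m'⟩
        refine ⟨hi1, fun _ => ?_⟩
        -- part (ii)
        set c2 : ℕ → B := fun j => M (m' + 1 - j) (m' + 1) (b 0) with hc2
        have hc2chain : ∀ l, l + 1 ≤ m' + 1 →
            ∑ i ∈ Finset.range (l + 1), L i (c2 (l - i)) = 0 := by
          intro l hl
          simpa only [hc2] using hCanonChain (m' + 1) (by omega) (b 0) hi1 l hl
        set d2 : ℕ → B := fun j => b j - c2 j with hd2
        have hd2chain : ∀ l, l + 1 ≤ m' + 1 →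
            ∑ i ∈ Finset.range (l + 1), L i (d2 (l - i)) = 0 := by
          intro l hl
          simp only [hd2, map_sub, Finset.sum_sub_distrib, hb l hl, hc2chain l hl, sub_zero]
        have hd20 : d2 0 = 0 := by
          simp only [hd2, hc2, Nat.sub_zero, hMdiag (m' + 1) (by omega),
            LinearMap.id_coe, id_eq, sub_self]
        have hsplit2 : ∑ i ∈ Finset.Icc 1 (m' + 1), L i (b (m' + 1 - i))
            = (∑ i ∈ Finset.Icc 1 (m' + 1), L i (c2 (m' + 1 - i)))
              + ∑ i ∈ Finset.Icc 1 (m' + 1), L i (d2 (m' + 1 - i)) := by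
          rw [← Finset.sum_add_distrib]
          apply Finset.sum_congr rfl
          intro i hi
          have : b (m' + 1 - i) = c2 (m' + 1 - i) + d2 (m' + 1 - i) := by
            simp only [hd2]; abel
          rw [this, map_add]
        have hc2Sb : ∑ i ∈ Finset.Icc 1 (m' + 1), L i (c2 (m' + 1 - i))
            = Sb (m' + 1 + 1) (b 0) := by
          rw [hSbrecApp (m' + 1) (by omega) (b 0)]
          apply Finset.sum_congr rfl
          intro i hi
          simp only [Finset.mem_Icc] at hi
          simp only [hc2]
          have hidx : m' + 1 - (m' + 1 - i) = i := by omega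
          rw [hidx]
        rw [hsplit2, hc2Sb, add_sub_cancel_left]
        exact hZ (m' + 1) (by omega) le_rfl d2 hd2chain hd20
  -- ===== rank estimates and stabilization =====
  have hRank1 : ∀ m, 1 ≤ m → ∀ x ∈ N m, (m : ℕ∞) ≤ rank x := by
    intro m hm x hx
    rw [hrank x]
    apply le_sSup
    refine ⟨m, hm, ⟨fun j => M (m - j) m x, ?_, ?_⟩, rfl⟩
    · simp only [Nat.sub_zero]
      rw [hMdiag m hm]
      rfl
    · intro l hl
      exact hCanonChain m hm x hx l hl
  have hNstep : ∀ m, k + 1 ≤ m → N m ≤ N (m + 1) := by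
    intro m hm x hx
    have h1 : (m : ℕ∞) ≤ rank x := hRank1 m (by omega) x hx
    rcases hstab1 x with hle | htop
    · exfalso
      have h2 : (m : ℕ∞) ≤ (k : ℕ∞) := le_trans h1 hle
      have h3 : m ≤ k := by exact_mod_cast h2
      omega
    · have hex : ∃ s ∈ {x_1 : ℕ∞ | ∃ m : ℕ, 1 ≤ m ∧
          (∃ b : ℕ → B, b 0 = x ∧
            ∀ l, l + 1 ≤ m → ∑ i ∈ Finset.range (l + 1), L i (b (l - i)) = 0) ∧
          x_1 = (m : ℕ∞)}, ¬ s ≤ (m : ℕ∞) := by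
        by_contra hcon
        push_neg at hcon
        have hsle : rank x ≤ (m : ℕ∞) := by
          rw [hrank x]
          exact sSup_le hcon
        rw [htop] at hsle
        exact (ENat.coe_ne_top m) (top_le_iff.mp hsle)
      obtain ⟨s, hsmem, hsgt⟩ := hex
      obtain ⟨m'', hm''1, ⟨bb, hbb0, hbbchain⟩, rfl⟩ := hsmem
      have hm''m : m + 1 ≤ m'' := by
        by_contra hcon
        exact hsgt (by exact_mod_cast (show m'' ≤ m by omega))
      have hchain : ∀ l, l + 1 ≤ m + 1 →
          ∑ i ∈ Finset.range (l + 1), L i (bb (l - i)) = 0 :=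
        fun l hl => hbbchain l (by omega)
      have hfin := (hPred (m + 1) bb hchain).1
      rw [hbb0] at hfin
      exact hfin
  have hNeq : ∀ t, k + 1 ≤ t → N (t + 1) = N t :=
    fun t ht => le_antisymm (hNmono t) (hNstep t ht)
  have hNcbot : ∀ t, k + 1 ≤ t → Nc (t + 1) = ⊥ := by
    intro t ht
    have hle : Nc (t + 1) ≤ N (t + 1) := by
      rw [hNeq t ht]
      exact hNcN t
    exact (hNcompl t).1.eq_bot_of_le hle
  have hTzero : ∀ j, k + 2 ≤ j → ∀ y : B', T j y = 0 := by
    intro j hj y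
    obtain ⟨t, rfl⟩ : ∃ t, j = t + 1 := ⟨j - 1, by omega⟩
    have hmem := hTrange (t + 1) (by omega) y
    rw [hNcbot t (by omega)] at hmem
    exact (Submodule.mem_bot 𝕂).mp hmem
  have hEzero : ∀ a ll, 1 ≤ a → a + 1 ≤ ll → E (k + 1 + a) (k + 1 + ll) = 0 := by
    intro a ll ha hall
    have hcol : k + 1 + ll = (k + ll) + 1 := by omega
    rw [hcol, hErec (k + ll) (k + 1 + a) (by omega) (by omega)]
    ext x
    simp only [LinearMap.neg_apply, LinearMap.comp_apply, LinearMap.zero_apply]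
    rw [hTzero (k + 1 + a) (by omega) _]
    exact neg_zero
  intro l hl
  refine ⟨fun a ha hal => hEzero a l ha hal, fun a ha hal => ?_⟩
  have hcol : k + 1 + l = (k + l) + 1 := by omega
  rw [hcol, hMrec (k + l) (k + 1 + a) (by omega) (by omega)]
  have hidx : k + 1 + a - 1 = k + a := by omega
  rw [hidx]
  rw [Finset.sum_eq_single_of_mem (k + l) (Finset.mem_Icc.mpr ⟨by omega, le_rfl⟩) ?_]
  · rw [hEdiag (k + l), LinearMap.comp_id]
  · intro b hbmem hbne
    simp only [Finset.mem_Icc] at hbmem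
    have hE0 : E (b + 1) ((k + l) + 1) = 0 := by
      have h1 : b + 1 = k + 1 + (b - k) := by omega
      have h2 : (k + l) + 1 = k + 1 + l := by omega
      rw [h1, h2]
      exact hEzero (b - k) l (by omega) (by omega)
    rw [hE0, LinearMap.comp_zero]
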